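/- Let d ∈ (0,1/2) and suppose the coefficients satisfy the long-memory decay conditions. Then the error of the best linear predictor of X_{k+1} from X_1,…,X_k (the fitted AR(k) model) satisfies: for every δ > 0 there is a constant C such that for all k ≥ 1, 0 ≤ inf_{(c_1,…,c_k) ∈ ℝ^k} ‖X_{k+1} − Σ_{j=1}^k c_j X_{k+1−j}‖² − σ_ε² ≤ C k^{−1+δ}. -/

import Mathlib

open scoped RealInnerProductSpace BigOperators
open Real

private lemma bern_pos {c : ℝ} (hc0 : 0 ≤ c) (hc1 : c ≤ 1) {t : ℝ} (ht : 1 ≤ t) :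
    c * t ^ (c - 1) ≤ t ^ c - (t - 1) ^ c := by
  have ht0 : (0:ℝ) < t := lt_of_lt_of_le one_pos ht
  have hs : (-1:ℝ) ≤ -1/t := by
    rw [neg_div, neg_le_neg_iff]
    exact (div_le_one ht0).2 ht
  have h := rpow_one_add_le_one_add_mul_self hs hc0 hc1
  have he : (1:ℝ) + -1/t = (t-1)/t := by field_simp; ring
  rw [he] at h
  have hd : ((t-1)/t) ^ c = (t-1)^c / t^c := Real.div_rpow (by linarith) ht0.le c
  rw [hd] at h
  have htc : (0:ℝ) < t ^ c := Real.rpow_pos_of_pos ht0 c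
  have h2 : (t-1)^c ≤ (1 + c * (-1/t)) * t^c := by
    rw [div_le_iff₀ htc] at h; linarith
  have h4 : t ^ c / t = t ^ (c-1) := by
    rw [Real.rpow_sub ht0, Real.rpow_one]
  have h3 : (1 + c * (-1/t)) * t^c = t^c - c * (t^c / t) := by ring
  rw [h3, h4] at h2; linarith

private lemma bern_neg {c : ℝ} (hc1 : c < 0) {t : ℝ} (ht : 2 ≤ t) :
    (-c) * t ^ (c - 1) ≤ (t - 1) ^ c - t ^ c := by
  have ht0 : (0:ℝ) < t := by linarith
  have ht1 : (0:ℝ) < t - 1 := by linarith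
  set e : ℝ := -c with he
  have hce : c = -e := by rw [he]; ring
  have he0 : 0 < e := by rw [he]; linarith
  have key : 1 + e/t ≤ ((t-1)/t) ^ c := by
    by_cases he1 : e ≤ 1
    · have hs : (-1:ℝ) ≤ (t-1)/t - 1 := by
        have h5 : (t-1)/t - 1 = -(1/t) := by field_simp; ring
        rw [h5, neg_le, neg_neg, div_le_one ht0]; linarith
      have h := rpow_one_add_le_one_add_mul_self hs he0.le he1
      have he2 : (1:ℝ) + ((t-1)/t - 1) = (t-1)/t := by ring
      rw [he2] at h
      have h5 : (t-1)/t - 1 = -(1/t) := by field_simp; ring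
      rw [h5] at h
      have h6 : ((t-1)/t) ^ e ≤ 1 - e/t := by
        have hr : 1 + e * -(1/t) = 1 - e/t := by ring
        linarith [h, hr]
      have hpos : (0:ℝ) < 1 - e/t := by
        have h8 : e/t ≤ 1/2 := by rw [div_le_iff₀ ht0]; linarith
        linarith
      have hu : (0:ℝ) < ((t-1)/t) ^ e := Real.rpow_pos_of_pos (by positivity) e
      have h9 : 1 + e/t ≤ (((t-1)/t) ^ e)⁻¹ := by
        have h10 : (1 - e/t)⁻¹ ≤ (((t-1)/t) ^ e)⁻¹ := by gcongr
        refine le_trans ?_ h10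
        rw [inv_eq_one_div, le_div_iff₀ hpos]
        nlinarith [sq_nonneg (e/t)]
      rw [hce, Real.rpow_neg (by positivity)]
      exact h9
    · push_neg at he1
      have hv : ((t-1)/t) ^ c = (t/(t-1)) ^ e := by
        rw [hce, Real.rpow_neg (by positivity), ← Real.inv_rpow (by positivity), inv_div]
      rw [hv]
      have hs : (0:ℝ) ≤ 1/(t-1) := by positivity
      have h := one_add_mul_self_le_rpow_one_add (s := 1/(t-1)) (by linarith) he1.le
      have he2 : (1:ℝ) + 1/(t-1) = t/(t-1) := by field_simp; ring
      rw [he2] at h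
      refine le_trans ?_ h
      have h20 : 1/t ≤ 1/(t-1) := by
        apply one_div_le_one_div_of_le ht1; linarith
      have h21 := mul_le_mul_of_nonneg_left h20 he0.le
      have h22 : e / t = e * (1/t) := by ring
      linarith [h21, h22]
  have hd : ((t-1)/t) ^ c = (t-1)^c / t^c := Real.div_rpow ht1.le ht0.le c
  rw [hd] at key
  have htc : (0:ℝ) < t ^ c := Real.rpow_pos_of_pos ht0 c
  have h13 : (1 + e/t) * t^c ≤ (t-1)^c := by
    rw [← le_div_iff₀ htc]; exact key
  have h4 : t ^ c / t = t ^ (c-1) := by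
    rw [Real.rpow_sub ht0, Real.rpow_one]
  have h14 : (1 + e/t) * t^c = t^c + e * (t^c/t) := by ring
  rw [h14, h4] at h13
  linarith

-- partial sums of t^α, α ∈ (-1,0)
private lemma sum_rpow_le {α : ℝ} (hα0 : -1 < α) (hα1 : α < 0) (p : ℕ) :
    ∑ t ∈ Finset.range (p+1), ((max t 1 : ℕ) : ℝ) ^ α
      ≤ (1 + 1/(α+1)) * ((p:ℝ)+1) ^ (α+1) := by
  have hc0 : 0 < α + 1 := by linarith
  have key : ∀ q : ℕ, ∑ t ∈ Finset.range q, (((t:ℝ)+1)) ^ α ≤ ((q:ℝ)) ^ (α+1) / (α+1) := by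
    intro q
    induction q with
    | zero => simp [Real.zero_rpow hc0.ne']
    | succ n ih =>
      rw [Finset.sum_range_succ]
      have hb := bern_pos (c := α+1) hc0.le (by linarith) (t := (n:ℝ)+1)
        (by linarith [Nat.cast_nonneg (α := ℝ) n])
      have harg : ((n:ℝ)+1) ^ (α+1-1) = ((n:ℝ)+1) ^ α := by norm_num
      rw [harg] at hb
      have h2 : ((n:ℝ)+1) ^ α ≤ (((n:ℝ)+1) ^ (α+1) - ((n:ℝ)) ^ (α+1)) / (α+1) := by
        rw [le_div_iff₀ hc0]
        have he : ((n:ℝ)+1) - 1 = (n:ℝ) := by ring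
        rw [he] at hb
        linarith
      have h3 := add_le_add ih h2
      push_cast
      calc ∑ t ∈ Finset.range n, ((t:ℝ)+1) ^ α + ((n:ℝ)+1) ^ α
          ≤ (n:ℝ) ^ (α+1) / (α+1) + (((n:ℝ)+1) ^ (α+1) - ((n:ℝ)) ^ (α+1)) / (α+1) := h3
        _ = ((n:ℝ)+1) ^ (α+1) / (α+1) := by ring
  rw [Finset.sum_range_succ']
  have h0 : ((max 0 1 : ℕ):ℝ) ^ α = 1 := by norm_num
  have hrest : ∀ t ∈ Finset.range p, ((max (t+1) 1 : ℕ):ℝ) ^ α = ((t:ℝ)+1) ^ α := by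
    intro t _
    have h : max (t+1) 1 = t+1 := by omega
    rw [h]; push_cast; ring_nf
  rw [Finset.sum_congr rfl hrest, h0]
  have h1 : ∑ t ∈ Finset.range p, ((t:ℝ)+1) ^ α ≤ ((p:ℝ)+1) ^ (α+1) / (α+1) := by
    refine le_trans (key p) ?_
    have h5 : ((p:ℝ)) ^ (α+1) ≤ ((p:ℝ)+1) ^ (α+1) :=
      Real.rpow_le_rpow (Nat.cast_nonneg p) (by linarith) hc0.le
    gcongr
  have h2 : (1:ℝ) ≤ ((p:ℝ)+1) ^ (α+1) := by
    calc (1:ℝ) = (1:ℝ) ^ (α+1) := (Real.one_rpow _).symm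
      _ ≤ ((p:ℝ)+1) ^ (α+1) :=
        Real.rpow_le_rpow (by norm_num) (by linarith [Nat.cast_nonneg (α := ℝ) p]) hc0.le
  calc ∑ t ∈ Finset.range p, ((t:ℝ)+1) ^ α + 1
      ≤ ((p:ℝ)+1) ^ (α+1) / (α+1) + ((p:ℝ)+1) ^ (α+1) := by linarith
    _ = (1 + 1/(α+1)) * ((p:ℝ)+1) ^ (α+1) := by ring

-- tail sums of (k+p+1)^γ, γ < -1
private lemma tail_rpow {γ : ℝ} (hγ : γ < -1) {k : ℕ} (hk : 1 ≤ k) :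
    Summable (fun p : ℕ => (((k:ℝ) + p + 1)) ^ γ) ∧
    ∑' p : ℕ, (((k:ℝ) + p + 1)) ^ γ ≤ 1/(-γ-1) * (k:ℝ) ^ (γ+1) := by
  have hkR : (1:ℝ) ≤ (k:ℝ) := by exact_mod_cast hk
  have hd : (0:ℝ) < -γ - 1 := by linarith
  have key : ∀ N : ℕ, ∑ p ∈ Finset.range N, (((k:ℝ) + p + 1)) ^ γ
      ≤ ((k:ℝ) ^ (γ+1) - ((k:ℝ)+N) ^ (γ+1)) / (-γ-1) := by
    intro N
    induction N with
    | zero => simp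
    | succ n ih =>
      rw [Finset.sum_range_succ]
      have hb := bern_neg (c := γ+1) (by linarith) (t := (k:ℝ)+n+1)
        (by linarith [Nat.cast_nonneg (α := ℝ) n])
      have harg : ((k:ℝ)+n+1) ^ (γ+1-1) = ((k:ℝ)+n+1) ^ γ := by norm_num
      rw [harg] at hb
      have h2 : ((k:ℝ)+n+1) ^ γ ≤ (((k:ℝ)+n) ^ (γ+1) - ((k:ℝ)+n+1) ^ (γ+1)) / (-γ-1) := by
        rw [le_div_iff₀ hd]
        have he : ((k:ℝ)+n+1) - 1 = (k:ℝ)+n := by ring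
        rw [he] at hb
        have hne : -(γ+1) = -γ-1 := by ring
        rw [hne] at hb
        linarith
      have h3 := add_le_add ih h2
      push_cast
      calc ∑ p ∈ Finset.range n, ((k:ℝ) + p + 1) ^ γ + ((k:ℝ)+n+1) ^ γ
          ≤ ((k:ℝ) ^ (γ+1) - ((k:ℝ)+n) ^ (γ+1)) / (-γ-1)
            + (((k:ℝ)+n) ^ (γ+1) - ((k:ℝ)+n+1) ^ (γ+1)) / (-γ-1) := h3
        _ = ((k:ℝ) ^ (γ+1) - ((k:ℝ)+(n+1)) ^ (γ+1)) / (-γ-1) := by push_cast; ring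
  have hbd : ∀ N : ℕ, ∑ p ∈ Finset.range N, (((k:ℝ) + p + 1)) ^ γ ≤ 1/(-γ-1) * (k:ℝ) ^ (γ+1) := by
    intro N
    refine le_trans (key N) ?_
    rw [div_le_iff₀ hd]
    have h6 : (0:ℝ) < ((k:ℝ)+N) ^ (γ+1) := by positivity
    calc (k:ℝ) ^ (γ+1) - ((k:ℝ)+N) ^ (γ+1) ≤ (k:ℝ) ^ (γ+1) := by linarith
      _ = 1/(-γ-1) * (k:ℝ) ^ (γ+1) * (-γ-1) := by field_simp
  have hnn : ∀ p : ℕ, (0:ℝ) ≤ (((k:ℝ) + p + 1)) ^ γ := fun p => by positivity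
  exact ⟨summable_of_sum_range_le hnn hbd, tsum_le_of_sum_range_le hnn hbd⟩


private lemma rpow_sq {x : ℝ} (hx : 0 ≤ x) (r : ℝ) : (x ^ r) ^ 2 = x ^ (2*r) := by
  rw [← Real.rpow_natCast (x ^ r) 2, ← Real.rpow_mul hx]
  norm_num [mul_comm]

private lemma add_sq_le_sq_add_sq' (x y : ℝ) : (x+y)^2 ≤ 2*x^2 + 2*y^2 := by
  nlinarith [sq_nonneg (x-y)]

private lemma half_rpow_le {x β : ℝ} (hx : 0 < x) (hβ : β ≤ 0) :
    (x/2) ^ β ≤ (4:ℝ)^(-β) * x ^ β := by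
  have e1 : (x/2) ^ β = x ^ β * ((2:ℝ)^(-β)) := by
    rw [Real.div_rpow hx.le (by norm_num), Real.rpow_neg (by norm_num : (0:ℝ) ≤ 2),
      div_eq_mul_inv]
  have e2 : (2:ℝ)^(-β) ≤ (4:ℝ)^(-β) :=
    Real.rpow_le_rpow (by norm_num) (by norm_num) (by linarith)
  rw [e1, mul_comm ((4:ℝ)^(-β))]
  exact mul_le_mul_of_nonneg_left e2 (Real.rpow_nonneg hx.le β)

private lemma analytic_bound (d δ' : ℝ) (hδ'pos : 0 < δ') (hδ'd : δ' < d)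
    (h2a : 2*(d - 1 + δ') < -1) (hδ14 : 4*δ' < 1) (hdpos : 0 < d)
    (a b : ℕ → ℝ) (A B : ℝ) (hA : 0 ≤ A) (hB : 1 ≤ B)
    (ha : ∀ j : ℕ, 1 ≤ j → |a j| ≤ A * (j:ℝ) ^ (-d - 1 + δ'))
    (hb : ∀ j : ℕ, 1 ≤ j → |b j| ≤ B * (j:ℝ) ^ (d - 1 + δ'))
    (hb0 : |b 0| ≤ B) :
    ∃ CU : ℝ, 0 ≤ CU ∧ ∀ k : ℕ, 1 ≤ k →
      Summable (fun p : ℕ => (∑ j ∈ Finset.range (p+1), |a (j+(k+1))| * |b (p-j)|) ^ 2) ∧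
      ∑' p : ℕ, (∑ j ∈ Finset.range (p+1), |a (j+(k+1))| * |b (p-j)|) ^ 2
        ≤ CU * (k:ℝ) ^ (-1 + 4*δ') := by
  set α := d - 1 + δ' with hαdef
  set β := -d - 1 + δ' with hβdef
  have hα0 : -1 < α := by rw [hαdef]; linarith
  have hα1 : α < 0 := by rw [hαdef]; linarith
  have hβ1 : β < -1 := by rw [hβdef]; linarith
  have hβ0 : β ≤ 0 := by linarith
  have h2α1 : 2*α < -1 := by rw [hαdef]; linarith
  have hγ1 : 2*α + 2*β + 2 < -1 := by rw [hαdef, hβdef]; linarith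
  have hα1p : 0 < α + 1 := by linarith
  set cα := 1 + 1/(α+1) with hcαdef
  have hcα : 0 < cα := by rw [hcαdef]; positivity
  set c₁ := cα * (4:ℝ) ^ (-β) with hc₁def
  have hc₁ : 0 < c₁ := by rw [hc₁def]; positivity
  set cβ := 1/(-β-1) with hcβdef
  have hcβ : 0 < cβ := by rw [hcβdef]; have : 0 < -β-1 := by linarith
                          positivity
  set c₂ := (2:ℝ) ^ (-α) * cβ with hc₂def
  have hc₂ : 0 < c₂ := by rw [hc₂def]; positivity
  refine ⟨(A*B)^2 * (2*c₁^2 * (1/(-(2*α+2*β+2)-1)) + 2*c₂^2 * (1/(-(2*α)-1))), ?_, ?_⟩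
  · have h1 : 0 < -(2*α+2*β+2)-1 := by linarith
    have h2 : 0 < -(2*α)-1 := by linarith
    positivity
  intro k hk
  have hkR : (1:ℝ) ≤ (k:ℝ) := by exact_mod_cast hk
  have hkR0 : (0:ℝ) < (k:ℝ) := by linarith
  -- abbreviations
  set T : ℕ → ℝ := fun p => ∑ j ∈ Finset.range (p+1), |a (j+(k+1))| * |b (p-j)| with hTdef
  set U : ℕ → ℝ := fun p =>
    ∑ t ∈ Finset.range (p+1), ((max t 1 : ℕ):ℝ) ^ α * (((p-t)+(k+1) : ℕ):ℝ) ^ β with hUdef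
  have hTnn : ∀ p, 0 ≤ T p := by
    intro p; rw [hTdef]
    exact Finset.sum_nonneg fun j _ => mul_nonneg (abs_nonneg _) (abs_nonneg _)
  have hUnn : ∀ p, 0 ≤ U p := by
    intro p; rw [hUdef]
    refine Finset.sum_nonneg fun t _ => mul_nonneg ?_ ?_ <;> positivity
  -- per-term coefficient bounds
  have hbt : ∀ t : ℕ, |b t| ≤ B * ((max t 1 : ℕ):ℝ) ^ α := by
    intro t
    rcases Nat.eq_zero_or_pos t with h0 | h1
    · subst h0
      have hm : max 0 1 = 1 := by omega
      rw [hm]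
      norm_num
      exact hb0
    · have hm : max t 1 = t := by omega
      rw [hm]
      exact hb t h1
  have hat : ∀ j : ℕ, |a (j+(k+1))| ≤ A * (((j+(k+1) : ℕ)):ℝ) ^ β := by
    intro j
    rw [hβdef]
    exact ha (j+(k+1)) (by omega)
  -- T ≤ A*B*U
  have hTU : ∀ p, T p ≤ A*B * U p := by
    intro p
    rw [hTdef, hUdef]
    have step1 : ∑ j ∈ Finset.range (p+1), |a (j+(k+1))| * |b (p-j)|
        ≤ ∑ j ∈ Finset.range (p+1),
            (A * (((j+(k+1) : ℕ)):ℝ) ^ β) * (B * ((max (p-j) 1 : ℕ):ℝ) ^ α) := by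
      refine Finset.sum_le_sum fun j _ => ?_
      exact mul_le_mul (hat j) (hbt (p-j)) (abs_nonneg _) (by positivity)
    refine step1.trans ?_
    have step2 : ∑ j ∈ Finset.range (p+1),
          (A * (((j+(k+1) : ℕ)):ℝ) ^ β) * (B * ((max (p-j) 1 : ℕ):ℝ) ^ α)
        = A*B * ∑ j ∈ Finset.range (p+1),
            ((max (p-j) 1 : ℕ):ℝ) ^ α * (((j+(k+1) : ℕ)):ℝ) ^ β := by
      rw [Finset.mul_sum]
      exact Finset.sum_congr rfl fun j _ => by ring
    rw [step2]
    have step3 : ∑ j ∈ Finset.range (p+1),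
          ((max (p-j) 1 : ℕ):ℝ) ^ α * (((j+(k+1) : ℕ)):ℝ) ^ β
        = ∑ t ∈ Finset.range (p+1),
            ((max t 1 : ℕ):ℝ) ^ α * (((p-t)+(k+1) : ℕ):ℝ) ^ β := by
      rw [← Finset.sum_range_reflect
        (fun t => ((max t 1 : ℕ):ℝ) ^ α * (((p-t)+(k+1) : ℕ):ℝ) ^ β) (p+1)]
      refine Finset.sum_congr rfl fun j hj => ?_
      simp only [Finset.mem_range] at hj
      have h1 : p + 1 - 1 - j = p - j := by omega
      have h2 : p - (p - j) = j := by omega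
      rw [h1, h2]
    rw [step3]
  -- tail bound for the β-sum
  have hTail : ∀ p, ∑ t ∈ Finset.range (p+1), (((p-t)+(k+1) : ℕ):ℝ) ^ β
      ≤ cβ * (k:ℝ) ^ (β+1) := by
    intro p
    have hrefl : ∑ t ∈ Finset.range (p+1), (((p-t)+(k+1) : ℕ):ℝ) ^ β
        = ∑ t ∈ Finset.range (p+1), (((t+(k+1) : ℕ)):ℝ) ^ β := by
      rw [← Finset.sum_range_reflect (fun t => (((t+(k+1) : ℕ)):ℝ) ^ β) (p+1)]
      refine Finset.sum_congr rfl fun j hj => ?_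
      simp only [Finset.mem_range] at hj
      have h1 : p + 1 - 1 - j = p - j := by omega
      rw [h1]
    rw [hrefl]
    have hcast : ∀ t : ℕ, (((t+(k+1) : ℕ)):ℝ) ^ β = ((k:ℝ) + t + 1) ^ β := by
      intro t; congr 1; push_cast; ring
    rw [Finset.sum_congr rfl fun t _ => hcast t]
    obtain ⟨hs, hts⟩ := tail_rpow hβ1 hk
    refine le_trans (hs.sum_le_tsum _ (fun t _ => by positivity)) ?_
    rw [hcβdef]
    exact hts
  -- case p ≤ k
  have hcase1 : ∀ p, p ≤ k → U p ≤ c₁ * ((p:ℝ)+1) ^ (α+1) * ((k:ℝ)+p+1) ^ β := by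
    intro p hpk
    have hterm : ∀ t ∈ Finset.range (p+1),
        ((max t 1 : ℕ):ℝ) ^ α * (((p-t)+(k+1) : ℕ):ℝ) ^ β
          ≤ ((max t 1 : ℕ):ℝ) ^ α * (((k:ℝ)+p+1)/2) ^ β := by
      intro t ht
      simp only [Finset.mem_range] at ht
      have hge : ((k:ℝ)+p+1)/2 ≤ (((p-t)+(k+1) : ℕ):ℝ) := by
        have hN : k + p + 1 ≤ 2 * ((p-t)+(k+1)) := by omega
        have : ((k + p + 1 : ℕ):ℝ) ≤ ((2 * ((p-t)+(k+1)) : ℕ):ℝ) := by exact_mod_cast hN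
        push_cast at this ⊢
        linarith
      have hb2 : (((p-t)+(k+1) : ℕ):ℝ) ^ β ≤ (((k:ℝ)+p+1)/2) ^ β :=
        Real.rpow_le_rpow_of_nonpos (by positivity) hge (by linarith)
      exact mul_le_mul_of_nonneg_left hb2 (by positivity)
    rw [hUdef]
    refine le_trans (Finset.sum_le_sum hterm) ?_
    rw [← Finset.sum_mul]
    have hsums := sum_rpow_le hα0 hα1 p
    have hhalf2 : (((k:ℝ)+p+1)/2) ^ β ≤ (4:ℝ)^(-β) * ((k:ℝ)+p+1) ^ β :=
      half_rpow_le (by positivity) (by linarith)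
    calc (∑ t ∈ Finset.range (p+1), ((max t 1 : ℕ):ℝ) ^ α) * (((k:ℝ)+p+1)/2) ^ β
        ≤ (cα * ((p:ℝ)+1) ^ (α+1)) * ((4:ℝ)^(-β) * ((k:ℝ)+p+1) ^ β) := by
          refine mul_le_mul hsums hhalf2 (by positivity) (by positivity)
      _ = c₁ * ((p:ℝ)+1) ^ (α+1) * ((k:ℝ)+p+1) ^ β := by rw [hc₁def]; ring
  -- case k < p
  have hcase2 : ∀ p, k < p → U p ≤ c₁ * ((p:ℝ)+1) ^ (α+1) * ((k:ℝ)+p+1) ^ β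
      + c₂ * ((p:ℝ)+1) ^ α * (k:ℝ) ^ (β+1) := by
    intro p hpk
    have hUp : U p = ∑ t ∈ Finset.range (p+1),
        ((max t 1 : ℕ):ℝ) ^ α * (((p-t)+(k+1) : ℕ):ℝ) ^ β := by rw [hUdef]
    rw [hUp,
      ← Finset.sum_filter_add_sum_filter_not (Finset.range (p+1)) (fun t => 2*t ≤ p)]
    have part1 : ∑ t ∈ (Finset.range (p+1)).filter (fun t => 2*t ≤ p),
        ((max t 1 : ℕ):ℝ) ^ α * (((p-t)+(k+1) : ℕ):ℝ) ^ β
        ≤ c₁ * ((p:ℝ)+1) ^ (α+1) * ((k:ℝ)+p+1) ^ β := by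
      have hterm : ∀ t ∈ (Finset.range (p+1)).filter (fun t => 2*t ≤ p),
          ((max t 1 : ℕ):ℝ) ^ α * (((p-t)+(k+1) : ℕ):ℝ) ^ β
            ≤ ((max t 1 : ℕ):ℝ) ^ α * (((k:ℝ)+p+1)/2) ^ β := by
        intro t ht
        simp only [Finset.mem_filter, Finset.mem_range] at ht
        have hge : ((k:ℝ)+p+1)/2 ≤ (((p-t)+(k+1) : ℕ):ℝ) := by
          have hN : k + p + 1 ≤ 2 * ((p-t)+(k+1)) := by omega
          have hc : ((k + p + 1 : ℕ):ℝ) ≤ ((2 * ((p-t)+(k+1)) : ℕ):ℝ) := by exact_mod_cast hN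
          push_cast at hc ⊢
          linarith
        exact mul_le_mul_of_nonneg_left
          (Real.rpow_le_rpow_of_nonpos (by positivity) hge (by linarith)) (by positivity)
      refine le_trans (Finset.sum_le_sum hterm) ?_
      rw [← Finset.sum_mul]
      have hsub : ∑ t ∈ (Finset.range (p+1)).filter (fun t => 2*t ≤ p), ((max t 1 : ℕ):ℝ) ^ α
          ≤ ∑ t ∈ Finset.range (p+1), ((max t 1 : ℕ):ℝ) ^ α :=
        Finset.sum_le_sum_of_subset_of_nonneg (Finset.filter_subset _ _)
          (fun t _ _ => by positivity)
      have hsums := sum_rpow_le hα0 hα1 p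
      have hhalf2 : (((k:ℝ)+p+1)/2) ^ β ≤ (4:ℝ)^(-β) * ((k:ℝ)+p+1) ^ β :=
        half_rpow_le (by positivity) (by linarith)
      calc (∑ t ∈ (Finset.range (p+1)).filter (fun t => 2*t ≤ p), ((max t 1 : ℕ):ℝ) ^ α)
            * (((k:ℝ)+p+1)/2) ^ β
          ≤ (cα * ((p:ℝ)+1) ^ (α+1)) * ((4:ℝ)^(-β) * ((k:ℝ)+p+1) ^ β) := by
            refine mul_le_mul (le_trans hsub hsums) hhalf2 (by positivity) (by positivity)
        _ = c₁ * ((p:ℝ)+1) ^ (α+1) * ((k:ℝ)+p+1) ^ β := by rw [hc₁def]; ring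
    have part2 : ∑ t ∈ (Finset.range (p+1)).filter (fun t => ¬ 2*t ≤ p),
        ((max t 1 : ℕ):ℝ) ^ α * (((p-t)+(k+1) : ℕ):ℝ) ^ β
        ≤ c₂ * ((p:ℝ)+1) ^ α * (k:ℝ) ^ (β+1) := by
      have hterm : ∀ t ∈ (Finset.range (p+1)).filter (fun t => ¬ 2*t ≤ p),
          ((max t 1 : ℕ):ℝ) ^ α * (((p-t)+(k+1) : ℕ):ℝ) ^ β
            ≤ (((p:ℝ)+1)/2) ^ α * (((p-t)+(k+1) : ℕ):ℝ) ^ β := by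
        intro t ht
        simp only [Finset.mem_filter, Finset.mem_range] at ht
        have hge : ((p:ℝ)+1)/2 ≤ ((max t 1 : ℕ):ℝ) := by
          have hN : p + 1 ≤ 2 * (max t 1) := by omega
          have hc : ((p + 1 : ℕ):ℝ) ≤ ((2 * (max t 1) : ℕ):ℝ) := by exact_mod_cast hN
          push_cast at hc ⊢
          linarith
        exact mul_le_mul_of_nonneg_right
          (Real.rpow_le_rpow_of_nonpos (by positivity) hge (by linarith)) (by positivity)
      refine le_trans (Finset.sum_le_sum hterm) ?_
      rw [← Finset.mul_sum]
      have hsub : ∑ t ∈ (Finset.range (p+1)).filter (fun t => ¬ 2*t ≤ p),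
            (((p-t)+(k+1) : ℕ):ℝ) ^ β
          ≤ ∑ t ∈ Finset.range (p+1), (((p-t)+(k+1) : ℕ):ℝ) ^ β :=
        Finset.sum_le_sum_of_subset_of_nonneg (Finset.filter_subset _ _)
          (fun t _ _ => by positivity)
      have hhalfα : (((p:ℝ)+1)/2) ^ α = (2:ℝ)^(-α) * ((p:ℝ)+1) ^ α := by
        rw [Real.div_rpow (by positivity) (by norm_num),
          Real.rpow_neg (by norm_num : (0:ℝ) ≤ 2)]
        ring
      calc (((p:ℝ)+1)/2) ^ α * ∑ t ∈ (Finset.range (p+1)).filter (fun t => ¬ 2*t ≤ p),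
            (((p-t)+(k+1) : ℕ):ℝ) ^ β
          ≤ (((p:ℝ)+1)/2) ^ α * (cβ * (k:ℝ) ^ (β+1)) := by
            refine mul_le_mul_of_nonneg_left (le_trans hsub (hTail p)) (by positivity)
        _ = c₂ * ((p:ℝ)+1) ^ α * (k:ℝ) ^ (β+1) := by rw [hc₂def, hhalfα]; ring
    exact add_le_add part1 part2

  -- squared bound
  have hx2 : ∀ p : ℕ, (c₁ * ((p:ℝ)+1) ^ (α+1) * ((k:ℝ)+p+1) ^ β)^2
      ≤ c₁^2 * (((k:ℝ)+p+1)) ^ (2*α+2*β+2) := by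
    intro p
    have he1 : (c₁ * ((p:ℝ)+1) ^ (α+1) * ((k:ℝ)+p+1) ^ β)^2
        = c₁^2 * ((p:ℝ)+1) ^ (2*(α+1)) * ((k:ℝ)+p+1) ^ (2*β) := by
      rw [mul_pow, mul_pow, rpow_sq (by positivity), rpow_sq (by positivity)]
    rw [he1]
    have he2 : ((p:ℝ)+1) ^ (2*(α+1)) ≤ ((k:ℝ)+p+1) ^ (2*(α+1)) :=
      Real.rpow_le_rpow (by positivity) (by linarith) (by linarith)
    calc c₁^2 * ((p:ℝ)+1) ^ (2*(α+1)) * ((k:ℝ)+p+1) ^ (2*β)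
        ≤ c₁^2 * ((k:ℝ)+p+1) ^ (2*(α+1)) * ((k:ℝ)+p+1) ^ (2*β) := by
          refine mul_le_mul_of_nonneg_right (mul_le_mul_of_nonneg_left he2 (by positivity))
            (by positivity)
      _ = c₁^2 * (((k:ℝ)+p+1)) ^ (2*α+2*β+2) := by
          rw [mul_assoc, ← Real.rpow_add (by positivity)]
          ring_nf
  have hU2 : ∀ p : ℕ, (U p)^2 ≤ 2*c₁^2 * (((k:ℝ)+p+1)) ^ (2*α+2*β+2)
      + (if k < p then 2*c₂^2 * ((p:ℝ)+1) ^ (2*α) * (k:ℝ) ^ (2*β+2) else 0) := by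
    intro p
    rcases le_or_gt p k with hpk | hpk
    · rw [if_neg (by omega : ¬ k < p)]
      have h1 := hcase1 p hpk
      have h2 : (U p)^2 ≤ (c₁ * ((p:ℝ)+1) ^ (α+1) * ((k:ℝ)+p+1) ^ β)^2 :=
        pow_le_pow_left₀ (hUnn p) h1 2
      have h3 := hx2 p
      have h4 : (0:ℝ) ≤ c₁^2 * (((k:ℝ)+p+1)) ^ (2*α+2*β+2) := by positivity
      linarith
    · rw [if_pos hpk]
      have h1 := hcase2 p hpk
      have hxnn : 0 ≤ c₁ * ((p:ℝ)+1) ^ (α+1) * ((k:ℝ)+p+1) ^ β := by positivity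
      have hynn : 0 ≤ c₂ * ((p:ℝ)+1) ^ α * (k:ℝ) ^ (β+1) := by positivity
      have h2 : (U p)^2 ≤ (c₁ * ((p:ℝ)+1) ^ (α+1) * ((k:ℝ)+p+1) ^ β
          + c₂ * ((p:ℝ)+1) ^ α * (k:ℝ) ^ (β+1))^2 :=
        pow_le_pow_left₀ (hUnn p) h1 2
      have h3 : (c₁ * ((p:ℝ)+1) ^ (α+1) * ((k:ℝ)+p+1) ^ β
            + c₂ * ((p:ℝ)+1) ^ α * (k:ℝ) ^ (β+1))^2
          ≤ 2*(c₁ * ((p:ℝ)+1) ^ (α+1) * ((k:ℝ)+p+1) ^ β)^2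
            + 2*(c₂ * ((p:ℝ)+1) ^ α * (k:ℝ) ^ (β+1))^2 :=
        add_sq_le_sq_add_sq' _ _
      have h4 := hx2 p
      have h5 : (c₂ * ((p:ℝ)+1) ^ α * (k:ℝ) ^ (β+1))^2
          = c₂^2 * ((p:ℝ)+1) ^ (2*α) * (k:ℝ) ^ (2*β+2) := by
        rw [mul_pow, mul_pow, rpow_sq (by positivity), rpow_sq (by positivity)]
        have : (2:ℝ)*(β+1) = 2*β+2 := by ring
        rw [this]
      linarith
  -- summability and tsum bounds
  have hγsum := tail_rpow hγ1 hk
  have hJtail := tail_rpow h2α1 (Nat.le_add_left 1 k)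
  set J : ℕ → ℝ := fun p => if k < p then ((p:ℝ)+1) ^ (2*α) else 0 with hJdef
  have hJshift : (fun q => J (q + (k+1))) = fun q : ℕ => (((k+1 : ℕ):ℝ) + q + 1) ^ (2*α) := by
    funext q
    simp only [hJdef]
    have hlt : k < q + (k+1) := by omega
    rw [if_pos hlt]
    congr 1
    push_cast
    ring
  have hJsum : Summable J := by
    rw [← summable_nat_add_iff (k+1), hJshift]
    exact hJtail.1
  have hc2α : (0:ℝ) < -(2*α)-1 := by linarith
  have hJts : ∑' p, J p ≤ 1/(-(2*α)-1) * (k:ℝ) ^ (2*α+1) := by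
    have h0 : ∑ i ∈ Finset.range (k+1), J i = 0 := by
      refine Finset.sum_eq_zero fun i hi => ?_
      simp only [Finset.mem_range] at hi
      simp only [hJdef]
      exact if_neg (by omega)
    calc ∑' p, J p = ∑ i ∈ Finset.range (k+1), J i + ∑' q, J (q + (k+1)) :=
          (hJsum.sum_add_tsum_nat_add (k+1)).symm
      _ = ∑' q : ℕ, (((k+1 : ℕ):ℝ) + q + 1) ^ (2*α) := by rw [h0, zero_add, hJshift]
      _ ≤ 1/(-(2*α)-1) * ((k+1 : ℕ):ℝ) ^ (2*α+1) := hJtail.2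
      _ ≤ 1/(-(2*α)-1) * (k:ℝ) ^ (2*α+1) := by
          have hmono : ((k+1 : ℕ):ℝ) ^ (2*α+1) ≤ (k:ℝ) ^ (2*α+1) :=
            Real.rpow_le_rpow_of_nonpos hkR0 (by push_cast; linarith) (by linarith)
          exact mul_le_mul_of_nonneg_left hmono (by positivity)
  have hGeq : (fun p : ℕ => if k < p then 2*c₂^2 * ((p:ℝ)+1) ^ (2*α) * (k:ℝ) ^ (2*β+2) else 0)
      = fun p => (2*c₂^2 * (k:ℝ) ^ (2*β+2)) * J p := by
    funext p
    simp only [hJdef]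
    by_cases h : k < p
    · simp only [if_pos h]; ring
    · simp only [if_neg h]; ring
  have hFsum : Summable (fun p : ℕ => 2*c₁^2 * (((k:ℝ)+p+1)) ^ (2*α+2*β+2)) :=
    hγsum.1.mul_left _
  have hGsum : Summable (fun p : ℕ =>
      if k < p then 2*c₂^2 * ((p:ℝ)+1) ^ (2*α) * (k:ℝ) ^ (2*β+2) else 0) := by
    rw [hGeq]
    exact hJsum.mul_left _
  have hFGsum := hFsum.add hGsum
  have hT2nn : ∀ p, (0:ℝ) ≤ (T p)^2 := fun p => sq_nonneg _
  have hT2le : ∀ p, (T p)^2 ≤ (A*B)^2 * ((U p)^2) := by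
    intro p
    have h1 : (T p)^2 ≤ (A*B * U p)^2 := pow_le_pow_left₀ (hTnn p) (hTU p) 2
    calc (T p)^2 ≤ (A*B * U p)^2 := h1
      _ = (A*B)^2 * ((U p)^2) := by ring
  have hmaj : ∀ p, (T p)^2 ≤ (A*B)^2 * (2*c₁^2 * (((k:ℝ)+p+1)) ^ (2*α+2*β+2)
      + (if k < p then 2*c₂^2 * ((p:ℝ)+1) ^ (2*α) * (k:ℝ) ^ (2*β+2) else 0)) := by
    intro p
    refine le_trans (hT2le p) ?_
    exact mul_le_mul_of_nonneg_left (hU2 p) (by positivity)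
  have hTsum : Summable (fun p => (T p)^2) :=
    Summable.of_nonneg_of_le hT2nn hmaj (hFGsum.mul_left _)
  constructor
  · exact hTsum
  have hγc : (0:ℝ) < -(2*α+2*β+2)-1 := by linarith
  have hexp : 2*α+2*β+2+1 = -1+4*δ' := by rw [hαdef, hβdef]; ring
  have hts : ∑' p, (T p)^2
      ≤ (A*B)^2 * ((∑' p : ℕ, 2*c₁^2 * (((k:ℝ)+p+1)) ^ (2*α+2*β+2))
        + ∑' p : ℕ, (if k < p then 2*c₂^2 * ((p:ℝ)+1) ^ (2*α) * (k:ℝ) ^ (2*β+2) else 0)) := by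
    calc ∑' p, (T p)^2
        ≤ ∑' p : ℕ, (A*B)^2 * (2*c₁^2 * (((k:ℝ)+p+1)) ^ (2*α+2*β+2)
          + (if k < p then 2*c₂^2 * ((p:ℝ)+1) ^ (2*α) * (k:ℝ) ^ (2*β+2) else 0)) :=
          hTsum.tsum_le_tsum hmaj (hFGsum.mul_left _)
      _ = (A*B)^2 * ∑' p : ℕ, (2*c₁^2 * (((k:ℝ)+p+1)) ^ (2*α+2*β+2)
          + (if k < p then 2*c₂^2 * ((p:ℝ)+1) ^ (2*α) * (k:ℝ) ^ (2*β+2) else 0)) :=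
          tsum_mul_left
      _ = (A*B)^2 * ((∑' p : ℕ, 2*c₁^2 * (((k:ℝ)+p+1)) ^ (2*α+2*β+2))
          + ∑' p : ℕ, (if k < p then 2*c₂^2 * ((p:ℝ)+1) ^ (2*α) * (k:ℝ) ^ (2*β+2) else 0)) := by
          rw [hFsum.tsum_add hGsum]
  have hF_ts : ∑' p : ℕ, 2*c₁^2 * (((k:ℝ)+p+1)) ^ (2*α+2*β+2)
      ≤ 2*c₁^2 * (1/(-(2*α+2*β+2)-1)) * (k:ℝ) ^ (-1+4*δ') := by
    rw [tsum_mul_left]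
    have := hγsum.2
    calc 2*c₁^2 * ∑' p : ℕ, (((k:ℝ)+p+1)) ^ (2*α+2*β+2)
        ≤ 2*c₁^2 * (1/(-(2*α+2*β+2)-1) * (k:ℝ) ^ (2*α+2*β+2+1)) :=
          mul_le_mul_of_nonneg_left this (by positivity)
      _ = 2*c₁^2 * (1/(-(2*α+2*β+2)-1)) * (k:ℝ) ^ (-1+4*δ') := by rw [hexp]; ring
  have hG_ts : ∑' p : ℕ, (if k < p then 2*c₂^2 * ((p:ℝ)+1) ^ (2*α) * (k:ℝ) ^ (2*β+2) else 0)
      ≤ 2*c₂^2 * (1/(-(2*α)-1)) * (k:ℝ) ^ (-1+4*δ') := by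
    rw [hGeq, tsum_mul_left]
    calc (2*c₂^2 * (k:ℝ) ^ (2*β+2)) * ∑' p, J p
        ≤ (2*c₂^2 * (k:ℝ) ^ (2*β+2)) * (1/(-(2*α)-1) * (k:ℝ) ^ (2*α+1)) :=
          mul_le_mul_of_nonneg_left hJts (by positivity)
      _ = 2*c₂^2 * (1/(-(2*α)-1)) * ((k:ℝ) ^ (2*β+2) * (k:ℝ) ^ (2*α+1)) := by ring
      _ = 2*c₂^2 * (1/(-(2*α)-1)) * (k:ℝ) ^ (-1+4*δ') := by
          rw [← Real.rpow_add hkR0]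
          congr 1
          rw [hαdef, hβdef]; ring
  calc ∑' p, (T p)^2
      ≤ (A*B)^2 * ((∑' p : ℕ, 2*c₁^2 * (((k:ℝ)+p+1)) ^ (2*α+2*β+2))
        + ∑' p : ℕ, (if k < p then 2*c₂^2 * ((p:ℝ)+1) ^ (2*α) * (k:ℝ) ^ (2*β+2) else 0)) := hts
    _ ≤ (A*B)^2 * (2*c₁^2 * (1/(-(2*α+2*β+2)-1)) * (k:ℝ) ^ (-1+4*δ')
        + 2*c₂^2 * (1/(-(2*α)-1)) * (k:ℝ) ^ (-1+4*δ')) := by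
        refine mul_le_mul_of_nonneg_left (add_le_add hF_ts hG_ts) (by positivity)
    _ = (A*B)^2 * (2*c₁^2 * (1/(-(2*α+2*β+2)-1)) + 2*c₂^2 * (1/(-(2*α)-1)))
        * (k:ℝ) ^ (-1+4*δ') := by ring


private lemma inner_eps_X
    {H : Type*} [NormedAddCommGroup H] [InnerProductSpace ℝ H]
    (σε : ℝ) (ε : ℤ → H)
    (hortho : ∀ m n : ℤ, ⟪ε m, ε n⟫ = if m = n then σε ^ 2 else 0)
    (b : ℕ → ℝ) (X : ℤ → H)
    (hX : ∀ n : ℤ, HasSum (fun j : ℕ => b j • ε (n - (j : ℤ))) (X n))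
    (m n : ℤ) :
    ⟪ε m, X n⟫ = if m ≤ n then σε ^ 2 * b (n - m).toNat else 0 := by
  have h := (hX n).mapL (innerSL ℝ (ε m))
  simp only [innerSL_apply_apply] at h
  by_cases hmn : m ≤ n
  · rw [if_pos hmn]
    have he : (fun j : ℕ => ⟪ε m, b j • ε (n - (j:ℤ))⟫)
        = fun j : ℕ => if j = (n - m).toNat then σε ^ 2 * b ((n-m).toNat) else 0 := by
      funext j
      rw [real_inner_smul_right, hortho]
      by_cases hj : (j:ℤ) = n - m
      · have hj' : j = (n - m).toNat := by omega
        rw [if_pos (by omega), if_pos hj']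
        rw [hj']; ring
      · rw [if_neg (by omega), if_neg (by omega)]
        ring
    rw [he] at h
    exact h.unique (hasSum_ite_eq _ _)
  · rw [if_neg hmn]
    have he : (fun j : ℕ => ⟪ε m, b j • ε (n - (j:ℤ))⟫) = fun _ => (0:ℝ) := by
      funext j
      rw [real_inner_smul_right, hortho, if_neg (by omega)]
      ring
    rw [he] at h
    exact h.unique hasSum_zero

private lemma norm_sq_of_coeff
    {H : Type*} [NormedAddCommGroup H] [InnerProductSpace ℝ H]
    (σε : ℝ) (ε : ℤ → H)
    (hortho : ∀ m n : ℤ, ⟪ε m, ε n⟫ = if m = n then σε ^ 2 else 0)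
    (c : ℕ → ℝ) (y : H)
    (h : HasSum (fun p : ℕ => c p • ε (-(p:ℤ))) y) :
    HasSum (fun p : ℕ => σε ^ 2 * (c p) ^ 2) (‖y‖ ^ 2) := by
  have hip : ∀ p : ℕ, ⟪ε (-(p:ℤ)), y⟫ = σε ^ 2 * c p := by
    intro p
    have h2 := h.mapL (innerSL ℝ (ε (-(p:ℤ))))
    simp only [innerSL_apply_apply] at h2
    have he : (fun q : ℕ => ⟪ε (-(p:ℤ)), c q • ε (-(q:ℤ))⟫)
        = fun q : ℕ => if q = p then σε ^ 2 * c p else 0 := by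
      funext q
      rw [real_inner_smul_right, hortho]
      by_cases hq : q = p
      · subst hq; rw [if_pos rfl, if_pos rfl]; ring
      · rw [if_neg (by omega), if_neg hq]; ring
    rw [he] at h2
    exact h2.unique (hasSum_ite_eq _ _)
  have h3 := h.mapL (innerSL ℝ y)
  simp only [innerSL_apply_apply] at h3
  have he : (fun p : ℕ => ⟪y, c p • ε (-(p:ℤ))⟫) = fun p : ℕ => σε ^ 2 * (c p) ^ 2 := by
    funext p
    rw [real_inner_smul_right, real_inner_comm, hip p]
    ring
  rw [he, real_inner_self_eq_norm_sq] at h3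
  exact h3


private lemma hasSum_X_shift
    {H : Type*} [NormedAddCommGroup H] [InnerProductSpace ℝ H]
    (ε : ℤ → H) (b : ℕ → ℝ) (X : ℤ → H)
    (hX : ∀ n : ℤ, HasSum (fun j : ℕ => b j • ε (n - (j : ℤ))) (X n))
    (j : ℕ) :
    HasSum (fun p : ℕ => (if j ≤ p then b (p - j) else 0) • ε (-(p:ℤ))) (X (-(j:ℤ))) := by
  set f : ℕ → H := fun p => (if j ≤ p then b (p - j) else 0) • ε (-(p:ℤ)) with hf
  have h1 : (fun n : ℕ => f (n + j)) = fun n : ℕ => b n • ε ((-(j:ℤ)) - (n:ℤ)) := by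
    funext n
    rw [hf]
    simp only [if_pos (Nat.le_add_left j n), Nat.add_sub_cancel]
    congr 1
    push_cast
    ring
  have h2 : ∑ i ∈ Finset.range j, f i = 0 := by
    apply Finset.sum_eq_zero
    intro i hi
    have hij : ¬ j ≤ i := by simp only [Finset.mem_range] at hi; omega
    show (if j ≤ i then b (i - j) else 0) • ε (-(i:ℤ)) = 0
    rw [if_neg hij, zero_smul]
  have h3 : HasSum (fun n : ℕ => f (n + j)) (X (-(j:ℤ)) - ∑ i ∈ Finset.range j, f i) := by
    rw [h1, h2, sub_zero]
    exact hX (-(j:ℤ))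
  exact (hasSum_nat_add_iff' j).mp h3


open scoped RealInnerProductSpace BigOperators

/-- for a long-memory linear process with coefficients satisfying the
long-memory decay conditions, the excess mean-squared error of the best linear
predictor of `X_{k+1}` from `X_1, …, X_k` (the fitted AR(k) model) is nonnegative and,
for every `δ > 0`, bounded by `C k^{-1+δ}`. -/
theorem ar_k_fit_error_bound
    {H : Type*} [NormedAddCommGroup H] [InnerProductSpace ℝ H]
    (d : ℝ) (hd : 0 < d) (hd' : d < 1 / 2)
    (σε : ℝ) (hσε : 0 < σε)
    (ε : ℤ → H)
    (hortho : ∀ m n : ℤ, ⟪ε m, ε n⟫ = if m = n then σε ^ 2 else 0)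
    (a b : ℕ → ℝ) (ha0 : a 0 = 1) (hb0 : b 0 = 1)
    (hb2 : Summable fun j => (b j) ^ 2)
    (ha1 : Summable fun j => |a j|)
    (X : ℤ → H)
    (hX : ∀ n : ℤ, HasSum (fun j : ℕ => b j • ε (n - (j : ℤ))) (X n))
    (hε : ∀ n : ℤ, HasSum (fun j : ℕ => a j • X (n - (j : ℤ))) (ε n))
    (hdecay : ∀ δ : ℝ, 0 < δ → ∃ C₁ C₂ : ℝ, ∀ j : ℕ, 1 ≤ j →
      |a j| ≤ C₁ * (j : ℝ) ^ (-d - 1 + δ) ∧ |b j| ≤ C₂ * (j : ℝ) ^ (d - 1 + δ)) :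
    ∀ δ : ℝ, 0 < δ → ∃ C : ℝ, ∀ k : ℕ, 1 ≤ k →
      0 ≤ (⨅ c : Fin k → ℝ,
            ‖X ((k : ℤ) + 1) - ∑ j : Fin k, c j • X ((k : ℤ) - ((j : ℕ) : ℤ))‖ ^ 2) - σε ^ 2 ∧
      (⨅ c : Fin k → ℝ,
            ‖X ((k : ℤ) + 1) - ∑ j : Fin k, c j • X ((k : ℤ) - ((j : ℕ) : ℤ))‖ ^ 2) - σε ^ 2
        ≤ C * (k : ℝ) ^ (-1 + δ) := by
  intro δ hδ
  set δ' := min (δ/4) (min (d/2) ((1 - 2*d)/8)) with hδ'def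
  have hδ'le1 : δ' ≤ δ/4 := min_le_left _ _
  have hδ'le2 : δ' ≤ d/2 := le_trans (min_le_right _ _) (min_le_left _ _)
  have hδ'le3 : δ' ≤ (1 - 2*d)/8 := le_trans (min_le_right _ _) (min_le_right _ _)
  have hδ'pos : 0 < δ' := lt_min (by linarith) (lt_min (by linarith) (by linarith))
  have hδ'd : δ' < d := by linarith
  have h2a : 2*(d - 1 + δ') < -1 := by linarith
  have hδ14 : 4*δ' < 1 := by linarith
  obtain ⟨C₁, C₂, hC⟩ := hdecay δ' hδ'pos
  set A := max C₁ 0 with hAdef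
  set B := max C₂ 1 with hBdef
  have hA : 0 ≤ A := le_max_right _ _
  have hB : 1 ≤ B := le_max_right _ _
  have ha' : ∀ j : ℕ, 1 ≤ j → |a j| ≤ A * (j:ℝ) ^ (-d - 1 + δ') := by
    intro j hj
    refine le_trans (hC j hj).1 ?_
    exact mul_le_mul_of_nonneg_right (le_max_left _ _) (Real.rpow_nonneg (Nat.cast_nonneg j) _)
  have hb' : ∀ j : ℕ, 1 ≤ j → |b j| ≤ B * (j:ℝ) ^ (d - 1 + δ') := by
    intro j hj
    refine le_trans (hC j hj).2 ?_
    exact mul_le_mul_of_nonneg_right (le_max_left _ _) (Real.rpow_nonneg (Nat.cast_nonneg j) _)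
  have hb0' : |b 0| ≤ B := by rw [hb0]; simpa using hB
  obtain ⟨CU, hCU0, hCU⟩ := analytic_bound d δ' hδ'pos hδ'd h2a hδ14 hd a b A B hA hB ha' hb' hb0'
  refine ⟨σε^2 * CU, ?_⟩
  intro k hk
  obtain ⟨hTsum, hTts⟩ := hCU k hk
  have hkR : (1:ℝ) ≤ (k:ℝ) := by exact_mod_cast hk
  have hinner := inner_eps_X σε ε hortho b X hX
  have hεnorm2 : ∀ m : ℤ, ‖ε m‖^2 = σε^2 := by
    intro m
    rw [← real_inner_self_eq_norm_sq, hortho, if_pos rfl]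
  have hεnorm : ∀ m : ℤ, ‖ε m‖ = σε := by
    intro m
    exact (pow_left_inj₀ (norm_nonneg (ε m)) hσε.le (by norm_num)).mp (hεnorm2 m)
  -- lower bound
  have hlow : ∀ c : Fin k → ℝ,
      σε^2 ≤ ‖X ((k:ℤ) + 1) - ∑ j : Fin k, c j • X ((k:ℤ) - ((j:ℕ):ℤ))‖ ^ 2 := by
    intro c
    set w := X ((k:ℤ) + 1) - ∑ j : Fin k, c j • X ((k:ℤ) - ((j:ℕ):ℤ)) with hwdef
    have hiw : ⟪ε ((k:ℤ)+1), w⟫ = σε^2 := by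
      rw [hwdef, inner_sub_right, inner_sum]
      have hXk1 : ⟪ε ((k:ℤ)+1), X ((k:ℤ)+1)⟫ = σε^2 := by
        rw [hinner, if_pos le_rfl]
        have h0 : ((k:ℤ)+1 - ((k:ℤ)+1)).toNat = 0 := by omega
        rw [h0, hb0, mul_one]
      have hXj : ∀ j : Fin k, ⟪ε ((k:ℤ)+1), c j • X ((k:ℤ) - ((j:ℕ):ℤ))⟫ = 0 := by
        intro j
        rw [real_inner_smul_right, hinner, if_neg (by omega)]
        ring
      rw [Finset.sum_congr rfl (fun j _ => hXj j), hXk1, Finset.sum_const_zero, sub_zero]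
    have hcs : σε^2 ≤ ‖ε ((k:ℤ)+1)‖ * ‖w‖ := hiw ▸ real_inner_le_norm _ _
    rw [hεnorm] at hcs
    nlinarith [sq_nonneg (‖w‖ - σε), hcs]
  have hInfLB : σε^2 ≤ ⨅ c : Fin k → ℝ,
      ‖X ((k:ℤ) + 1) - ∑ j : Fin k, c j • X ((k:ℤ) - ((j:ℕ):ℤ))‖ ^ 2 := le_ciInf hlow
  -- the truncated-AR candidate
  set v : H := ∑ j ∈ Finset.range (k+1), a j • X ((k:ℤ) + 1 - (j:ℤ)) with hvdef
  have hBdd : BddBelow (Set.range fun c : Fin k → ℝ =>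
      ‖X ((k:ℤ) + 1) - ∑ j : Fin k, c j • X ((k:ℤ) - ((j:ℕ):ℤ))‖ ^ 2) := by
    refine ⟨0, ?_⟩
    rintro x ⟨c, rfl⟩
    positivity
  have hveq2 : X ((k:ℤ) + 1) - ∑ j : Fin k,
      (fun j : Fin k => -(a ((j:ℕ)+1))) j • X ((k:ℤ) - ((j:ℕ):ℤ)) = v := by
    have hfin : ∑ j : Fin k, (fun j : Fin k => -(a ((j:ℕ)+1))) j • X ((k:ℤ) - ((j:ℕ):ℤ))
        = ∑ j ∈ Finset.range k, -(a (j+1)) • X ((k:ℤ) - (j:ℤ)) :=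
      Fin.sum_univ_eq_sum_range (fun j => -(a (j+1)) • X ((k:ℤ) - (j:ℤ))) k
    rw [hfin, hvdef, Finset.sum_range_succ']
    have h0 : a 0 • X ((k:ℤ) + 1 - ((0:ℕ):ℤ)) = X ((k:ℤ)+1) := by
      rw [ha0, one_smul]
      norm_num
    have hterm : ∀ j ∈ Finset.range k,
        a (j+1) • X ((k:ℤ) + 1 - ((j+1 : ℕ):ℤ)) = a (j+1) • X ((k:ℤ) - (j:ℤ)) := by
      intro j _
      congr 2
      push_cast
      ring
    rw [Finset.sum_congr rfl hterm, h0]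
    have : ∑ j ∈ Finset.range k, -(a (j+1)) • X ((k:ℤ) - (j:ℤ))
        = -∑ j ∈ Finset.range k, a (j+1) • X ((k:ℤ) - (j:ℤ)) := by
      rw [← Finset.sum_neg_distrib]
      exact Finset.sum_congr rfl fun j _ => by rw [neg_smul]
    rw [this, sub_neg_eq_add, add_comm]
  have hinf_le : (⨅ c : Fin k → ℝ,
      ‖X ((k:ℤ) + 1) - ∑ j : Fin k, c j • X ((k:ℤ) - ((j:ℕ):ℤ))‖ ^ 2) ≤ ‖v‖^2 := by
    have h := ciInf_le hBdd (fun j : Fin k => -(a ((j:ℕ)+1)))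
    rwa [hveq2] at h
  -- residual
  have hR : HasSum (fun j : ℕ => a (j+(k+1)) • X ((k:ℤ) + 1 - ((j+(k+1) : ℕ):ℤ)))
      (ε ((k:ℤ)+1) - v) := by
    have h := (hasSum_nat_add_iff' (f := fun j : ℕ => a j • X ((k:ℤ) + 1 - (j:ℤ)))
      (g := ε ((k:ℤ)+1)) (k+1)).mpr (hε ((k:ℤ)+1))
    exact h
  set R : H := ε ((k:ℤ)+1) - v with hRdef
  have hR' : HasSum (fun j : ℕ => a (j+(k+1)) • X (-(j:ℤ))) R := by
    have he : (fun j : ℕ => a (j+(k+1)) • X ((k:ℤ) + 1 - ((j+(k+1) : ℕ):ℤ)))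
        = fun j : ℕ => a (j+(k+1)) • X (-(j:ℤ)) := by
      funext j
      congr 2
      push_cast
      ring
    rw [← he]
    exact hR
  have hoR : ⟪ε ((k:ℤ)+1), R⟫ = 0 := by
    have h := hR'.mapL (innerSL ℝ (ε ((k:ℤ)+1)))
    simp only [innerSL_apply_apply] at h
    have hz : (fun j : ℕ => ⟪ε ((k:ℤ)+1), a (j+(k+1)) • X (-(j:ℤ))⟫) = fun _ => (0:ℝ) := by
      funext j
      rw [real_inner_smul_right, hinner, if_neg (by omega)]
      ring
    rw [hz] at h
    exact h.unique hasSum_zero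
  have hnv : ‖v‖^2 = σε^2 + ‖R‖^2 := by
    have hveq : v = ε ((k:ℤ)+1) - R := by rw [hRdef, sub_sub_cancel]
    rw [hveq, norm_sub_sq_real, hεnorm2, hoR]
    ring
  -- partial sums of the residual expansion
  have hQN : ∀ N : ℕ, HasSum (fun p : ℕ => (∑ j ∈ Finset.range N,
      a (j+(k+1)) * (if j ≤ p then b (p-j) else 0)) • ε (-(p:ℤ)))
      (∑ j ∈ Finset.range N, a (j+(k+1)) • X (-(j:ℤ))) := by
    intro N
    have h := hasSum_sum (s := Finset.range N)
      (f := fun (j : ℕ) (p : ℕ) => a (j+(k+1)) • ((if j ≤ p then b (p-j) else 0) • ε (-(p:ℤ))))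
      (a := fun j => a (j+(k+1)) • X (-(j:ℤ)))
      (fun j _ => (hasSum_X_shift ε b X hX j).const_smul _)
    have he : (fun p : ℕ => ∑ j ∈ Finset.range N,
        a (j+(k+1)) • ((if j ≤ p then b (p-j) else 0) • ε (-(p:ℤ))))
        = fun p : ℕ => (∑ j ∈ Finset.range N,
            a (j+(k+1)) * (if j ≤ p then b (p-j) else 0)) • ε (-(p:ℤ)) := by
      funext p
      rw [Finset.sum_smul]
      exact Finset.sum_congr rfl fun j _ => by rw [smul_smul]
    rw [he] at h
    exact h
  have hQNnorm : ∀ N : ℕ, HasSum (fun p : ℕ => σε^2 * (∑ j ∈ Finset.range N,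
      a (j+(k+1)) * (if j ≤ p then b (p-j) else 0))^2)
      (‖∑ j ∈ Finset.range N, a (j+(k+1)) • X (-(j:ℤ))‖^2) :=
    fun N => norm_sq_of_coeff σε ε hortho _ _ (hQN N)
  have hSNle : ∀ N p : ℕ, (∑ j ∈ Finset.range N,
      a (j+(k+1)) * (if j ≤ p then b (p-j) else 0))^2
      ≤ (∑ j ∈ Finset.range (p+1), |a (j+(k+1))| * |b (p-j)|)^2 := by
    intro N p
    have h1 : |∑ j ∈ Finset.range N, a (j+(k+1)) * (if j ≤ p then b (p-j) else 0)|
        ≤ ∑ j ∈ Finset.range (p+1), |a (j+(k+1))| * |b (p-j)| := by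
      refine le_trans (Finset.abs_sum_le_sum_abs _ _) ?_
      have h2 : ∀ j ∈ Finset.range N, |a (j+(k+1)) * (if j ≤ p then b (p-j) else 0)|
          = if j ≤ p then |a (j+(k+1))| * |b (p-j)| else 0 := by
        intro j _
        by_cases h : j ≤ p
        · rw [if_pos h, if_pos h, abs_mul]
        · rw [if_neg h, if_neg h, mul_zero, abs_zero]
      rw [Finset.sum_congr rfl h2, ← Finset.sum_filter]
      refine Finset.sum_le_sum_of_subset_of_nonneg ?_
        (fun j _ _ => mul_nonneg (abs_nonneg _) (abs_nonneg _))
      intro j hj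
      simp only [Finset.mem_filter, Finset.mem_range] at hj
      simp only [Finset.mem_range]
      omega
    calc (∑ j ∈ Finset.range N, a (j+(k+1)) * (if j ≤ p then b (p-j) else 0))^2
        = |∑ j ∈ Finset.range N, a (j+(k+1)) * (if j ≤ p then b (p-j) else 0)|^2 :=
          (sq_abs _).symm
      _ ≤ (∑ j ∈ Finset.range (p+1), |a (j+(k+1))| * |b (p-j)|)^2 :=
          pow_le_pow_left₀ (abs_nonneg _) h1 2
  have hRle : ‖R‖^2 ≤ ∑' p : ℕ, σε^2 * (∑ j ∈ Finset.range (p+1),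
      |a (j+(k+1))| * |b (p-j)|)^2 := by
    have h1 := hR'.tendsto_sum_nat
    have h2 : Filter.Tendsto (fun N => ‖∑ j ∈ Finset.range N, a (j+(k+1)) • X (-(j:ℤ))‖^2)
        Filter.atTop (nhds (‖R‖^2)) := (h1.norm).pow 2
    refine le_of_tendsto h2 (Filter.Eventually.of_forall fun N => ?_)
    have h3 := hQNnorm N
    rw [← h3.tsum_eq]
    refine h3.summable.tsum_le_tsum (fun p => ?_) (hTsum.mul_left _)
    exact mul_le_mul_of_nonneg_left (hSNle N p) (sq_nonneg σε)
  have hts : ∑' p : ℕ, σε^2 * (∑ j ∈ Finset.range (p+1),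
      |a (j+(k+1))| * |b (p-j)|)^2 ≤ σε^2 * (CU * (k:ℝ) ^ (-1 + 4*δ')) := by
    rw [tsum_mul_left]
    exact mul_le_mul_of_nonneg_left hTts (sq_nonneg σε)
  have hkexp : (k:ℝ) ^ (-1 + 4*δ') ≤ (k:ℝ) ^ (-1 + δ) :=
    Real.rpow_le_rpow_of_exponent_le hkR (by linarith)
  constructor
  · linarith [hInfLB]
  · calc (⨅ c : Fin k → ℝ,
        ‖X ((k:ℤ) + 1) - ∑ j : Fin k, c j • X ((k:ℤ) - ((j:ℕ):ℤ))‖ ^ 2) - σε^2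
        ≤ ‖v‖^2 - σε^2 := by linarith [hinf_le]
      _ = ‖R‖^2 := by rw [hnv]; ring
      _ ≤ ∑' p : ℕ, σε^2 * (∑ j ∈ Finset.range (p+1),
          |a (j+(k+1))| * |b (p-j)|)^2 := hRle
      _ ≤ σε^2 * (CU * (k:ℝ) ^ (-1 + 4*δ')) := hts
      _ ≤ σε^2 * CU * (k:ℝ) ^ (-1 + δ) := by
          rw [← mul_assoc]
          exact mul_le_mul_of_nonneg_left hkexp (by positivity)
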